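/- For a single tree F with root u, and indices i ≤ j: sim(F, T2[i,j)) = max( sim(F - u, T2[i,j)), max over nodes v ∈ T2[i,j) of ( sim(F - u, T2[l(v)+1, r(v)-1)) + η(u, v) ) ), where η(u,v) = 2 - δ(u,v), with δ(u,v) = 0 if labels match and 1 otherwise. -/
import Mathlib


/-- Ordered rooted trees with node labels from `α`. -/
inductive Tree' (α : Type) : Type
  | node (label : α) (children : List (Tree' α))

/-- An ordered forest is an ordered list of trees. -/
abbrev Forest (α : Type) := List (Tree' α)

mutual
/-- Number of nodes of a tree. -/
def Tree'.size {α : Type} : Tree' α → ℕ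
  | .node _ cs => 1 + Forest.size cs
/-- Number of nodes of a forest. -/
def Forest.size {α : Type} : Forest α → ℕ
  | [] => 0
  | t :: ts => Tree'.size t + Forest.size ts
end

/-- A single edit operation on a forest: delete a node (promoting its children, in
order, to its parent) or relabel a node. -/
inductive EditStep {α : Type} : Forest α → Forest α → Prop
  | delete (pre : Forest α) (a : α) (cs post : Forest α) :
      EditStep (pre ++ Tree'.node a cs :: post) (pre ++ cs ++ post)
  | relabel (pre : Forest α) (a b : α) (cs post : Forest α) :
      EditStep (pre ++ Tree'.node a cs :: post) (pre ++ Tree'.node b cs :: post)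
  | inside (pre : Forest α) (a : α) {cs cs' : Forest α} (post : Forest α) :
      EditStep cs cs' →
      EditStep (pre ++ Tree'.node a cs :: post) (pre ++ Tree'.node a cs' :: post)

/-- `EditSteps n F G`: `G` is obtained from `F` by exactly `n` edit operations. -/
inductive EditSteps {α : Type} : ℕ → Forest α → Forest α → Prop
  | refl (F : Forest α) : EditSteps 0 F F
  | tail {n : ℕ} {F G H : Forest α} : EditSteps n F G → EditStep G H → EditSteps (n + 1) F H

/-- The (unweighted) tree edit distance: the minimum total number of relabelings
and deletions applied to `F1` and `F2` so that they become identical. -/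
noncomputable def ed {α : Type} (F1 F2 : Forest α) : ℕ :=
  sInf {k | ∃ (k1 k2 : ℕ) (G : Forest α), k = k1 + k2 ∧ EditSteps k1 F1 G ∧ EditSteps k2 F2 G}

/-- The similarity between two forests. -/
noncomputable def sim {α : Type} (F1 F2 : Forest α) : ℤ :=
  (Forest.size F1 : ℤ) + Forest.size F2 - ed F1 F2

mutual
/-- Helper for the subforest operation: the part of tree `t`, whose bi-order
traversal interval starts at position `p`, surviving the restriction to positions `[l, r)`.
A node is kept iff both of its occurrences lie at positions `l, …, r - 1`;
removed nodes have their children promoted. -/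
def cutT {α : Type} (l r p : ℕ) : Tree' α → Forest α
  | .node a cs =>
      if l ≤ p ∧ p + 2 * Tree'.size (Tree'.node a cs) ≤ r then [Tree'.node a cs]
      else cutF l r (p + 1) cs
/-- The part of forest `F`, whose bi-order traversal starts at position `p`,
surviving the restriction to positions `[l, r)`. -/
def cutF {α : Type} (l r p : ℕ) : Forest α → Forest α
  | [] => []
  | t :: ts => cutT l r p t ++ cutF l r (p + 2 * Tree'.size t) ts
end

/-- The subforest `F[l, r)` determined by the interval `[l, r)` of the (1-indexed)
bi-order traversal sequence of `F`. -/
def subforest {α : Type} (F : Forest α) (l r : ℕ) : Forest α := cutF l r 1 F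

/-- `OccF F base p t`: the forest `F`, whose bi-order traversal starts at position `base`,
has a node with subtree `t` whose first occurrence is at position `p`. -/
inductive OccF {α : Type} : Forest α → ℕ → ℕ → Tree' α → Prop
  | head (a : α) (cs ts : Forest α) (base : ℕ) :
      OccF (Tree'.node a cs :: ts) base base (Tree'.node a cs)
  | inChildren {cs : Forest α} {p : ℕ} {t : Tree' α} (a : α) (ts : Forest α) (base : ℕ) :
      OccF cs (base + 1) p t → OccF (Tree'.node a cs :: ts) base p t
  | inRest {ts : Forest α} {p : ℕ} {t : Tree' α} (t0 : Tree' α) (base : ℕ) :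
      OccF ts (base + 2 * Tree'.size t0) p t → OccF (t0 :: ts) base p t

/-- The label of the root of a tree. -/
def Tree'.label {α : Type} : Tree' α → α
  | .node a _ => a

/-- A node occurrence `(p, t)` (first occurrence at position `p`, subtree `t`) is a strict
ancestor of the occurrence `(q, s)`. -/
def Anc {α : Type} (u v : ℕ × Tree' α) : Prop :=
  u.1 < v.1 ∧ v.1 + 2 * Tree'.size v.2 ≤ u.1 + 2 * Tree'.size u.2

/-- The node occurrence `u` precedes the node occurrence `v`: `r(u) ≤ l(v)`. -/
def Prec {α : Type} (u v : ℕ × Tree' α) : Prop :=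
  u.1 + 2 * Tree'.size u.2 ≤ v.1


/-! ### Auxiliary lemmas -/

section Aux
variable {α : Type}

theorem es_cast {n m : ℕ} {F G : Forest α} (h : EditSteps n F G) (e : n = m) :
    EditSteps m F G := e ▸ h

theorem es_zero {F G : Forest α} (h : EditSteps 0 F G) : F = G := by
  cases h; rfl

theorem es_single {F G : Forest α} (h : EditStep F G) : EditSteps 1 F G :=
  EditSteps.tail (EditSteps.refl F) h

theorem es_trans {m n : ℕ} {F G H : Forest α} (h1 : EditSteps m F G)
    (h2 : EditSteps n G H) : EditSteps (m + n) F H := by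
  induction h2 with
  | refl => exact h1
  | tail h s ih => exact EditSteps.tail (ih h1) s

theorem es_cons {n : ℕ} {F G H : Forest α} (h : EditStep F G)
    (h2 : EditSteps n G H) : EditSteps (n + 1) F H := by
  induction h2 with
  | refl => exact es_single h
  | tail h' s ih => exact EditSteps.tail (ih h) s

theorem es_headrec {n : ℕ} {F H : Forest α} (h : EditSteps n F H) :
    (n = 0 ∧ F = H) ∨ ∃ (m : ℕ) (G : Forest α), n = m + 1 ∧ EditStep F G ∧ EditSteps m G H := by
  induction h with
  | refl => exact Or.inl ⟨rfl, rfl⟩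
  | tail h s ih =>
    rcases ih with ⟨rfl, rfl⟩ | ⟨m, G, rfl, s', hs⟩
    · exact Or.inr ⟨0, _, rfl, s, EditSteps.refl _⟩
    · exact Or.inr ⟨m + 1, G, rfl, s', EditSteps.tail hs s⟩

theorem size_append (F G : Forest α) :
    Forest.size (F ++ G) = Forest.size F + Forest.size G := by
  induction F with
  | nil => simp [Forest.size]
  | cons t ts ih => simp [Forest.size, ih]; omega

theorem size_tree (a : α) (cs : Forest α) :
    Tree'.size (Tree'.node a cs) = 1 + Forest.size cs := rfl

theorem size_cons (t : Tree' α) (ts : Forest α) :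
    Forest.size (t :: ts) = Tree'.size t + Forest.size ts := rfl

theorem size_tree_pos (t : Tree' α) : 1 ≤ Tree'.size t := by
  cases t with
  | node a cs => rw [size_tree]; omega

theorem step_size {F G : Forest α} (h : EditStep F G) :
    Forest.size G ≤ Forest.size F ∧ Forest.size F ≤ Forest.size G + 1 := by
  induction h with
  | delete pre a cs post => simp [size_append, size_cons, size_tree]; omega
  | relabel pre a b cs post => simp [size_append, size_cons, size_tree]
  | inside pre a post h ih => simp [size_append, size_cons, size_tree]; omega

theorem step_ctx {F G : Forest α} (pre post : Forest α) (h : EditStep F G) :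
    EditStep (pre ++ F ++ post) (pre ++ G ++ post) := by
  induction h with
  | delete pre' a cs post' =>
    have e1 : pre ++ (pre' ++ Tree'.node a cs :: post') ++ post
        = (pre ++ pre') ++ Tree'.node a cs :: (post' ++ post) := by simp
    have e2 : pre ++ (pre' ++ cs ++ post') ++ post
        = (pre ++ pre') ++ cs ++ (post' ++ post) := by simp
    rw [e1, e2]; exact EditStep.delete _ a _ _
  | relabel pre' a b cs post' =>
    have e1 : pre ++ (pre' ++ Tree'.node a cs :: post') ++ post
        = (pre ++ pre') ++ Tree'.node a cs :: (post' ++ post) := by simp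
    have e2 : pre ++ (pre' ++ Tree'.node b cs :: post') ++ post
        = (pre ++ pre') ++ Tree'.node b cs :: (post' ++ post) := by simp
    rw [e1, e2]; exact EditStep.relabel _ a b _ _
  | @inside pre' a cs0 cs0' post' h ih =>
    have e1 : pre ++ (pre' ++ Tree'.node a cs0 :: post') ++ post
        = (pre ++ pre') ++ Tree'.node a cs0 :: (post' ++ post) := by simp
    have e2 : pre ++ (pre' ++ Tree'.node a cs0' :: post') ++ post
        = (pre ++ pre') ++ Tree'.node a cs0' :: (post' ++ post) := by simp
    rw [e1, e2]; exact EditStep.inside _ a _ h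

theorem es_ctx {n : ℕ} {F G : Forest α} (pre post : Forest α) (h : EditSteps n F G) :
    EditSteps n (pre ++ F ++ post) (pre ++ G ++ post) := by
  induction h with
  | refl => exact EditSteps.refl _
  | tail h s ih => exact EditSteps.tail ih (step_ctx pre post s)

theorem es_inside {n : ℕ} (a : α) {cs cs' : Forest α} (h : EditSteps n cs cs') :
    EditSteps n [Tree'.node a cs] [Tree'.node a cs'] := by
  induction h with
  | refl => exact EditSteps.refl _
  | tail h s ih =>
    exact EditSteps.tail ih (by simpa using EditStep.inside [] a [] s)

theorem delete_all : ∀ (n : ℕ) (F : Forest α), Forest.size F = n → EditSteps n F [] := by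
  intro n
  induction n using Nat.strong_induction_on with
  | _ n ih =>
    intro F hF
    match F with
    | [] =>
      have : n = 0 := by simpa [Forest.size] using hF.symm
      subst this; exact EditSteps.refl _
    | Tree'.node a cs :: ts =>
      have hstep : EditStep (Tree'.node a cs :: ts) (cs ++ ts) := by
        simpa using EditStep.delete [] a cs ts
      have hsz : Forest.size (cs ++ ts) = n - 1 := by
        rw [size_append]; rw [size_cons, size_tree] at hF; omega
      have hn : 1 ≤ n := by rw [size_cons, size_tree] at hF; omega
      have := es_cons hstep (ih (n - 1) (by omega) _ hsz)
      exact es_cast this (by omega)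

end Aux

/-- `t` occurs as a subtree somewhere in the forest `F`. -/
inductive SubT {α : Type} : Tree' α → Forest α → Prop
  | head (t : Tree' α) (ts : Forest α) : SubT t (t :: ts)
  | inChildren {t : Tree' α} {cs : Forest α} (a : α) (ts : Forest α) :
      SubT t cs → SubT t (Tree'.node a cs :: ts)
  | tail {t : Tree' α} {ts : Forest α} (t0 : Tree' α) : SubT t ts → SubT t (t0 :: ts)

section Aux2
variable {α : Type}

theorem sub_size {t : Tree' α} {F : Forest α} (h : SubT t F) :
    Tree'.size t ≤ Forest.size F := by
  induction h with
  | head ts => rw [size_cons]; omega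
  | inChildren a ts h ih => rw [size_cons, size_tree]; omega
  | tail t0 h ih =>
    rw [size_cons]
    have := size_tree_pos (α := α) t0
    omega

theorem sub_append_left {t : Tree' α} {F : Forest α} (G : Forest α) (h : SubT t F) :
    SubT t (F ++ G) := by
  induction h with
  | head ts => exact SubT.head _ _
  | inChildren a ts h ih => exact SubT.inChildren a _ h
  | tail t0 h ih => exact SubT.tail t0 ih

theorem sub_append_right {t : Tree' α} (F : Forest α) {G : Forest α} (h : SubT t G) :
    SubT t (F ++ G) := by
  induction F with
  | nil => exact h
  | cons t0 ts ih => exact SubT.tail t0 ih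

theorem sub_append_elim {t : Tree' α} {F G : Forest α} (h : SubT t (F ++ G)) :
    SubT t F ∨ SubT t G := by
  induction F with
  | nil => exact Or.inr h
  | cons t0 ts ih =>
    cases h with
    | head => exact Or.inl (SubT.head _ _)
    | inChildren a ts' h' => exact Or.inl (SubT.inChildren a _ h')
    | tail t0' h' =>
      rcases ih h' with h'' | h''
      · exact Or.inl (SubT.tail _ h'')
      · exact Or.inr h''

theorem reduce_to_sub {t : Tree' α} {F : Forest α} (h : SubT t F) :
    EditSteps (Forest.size F - Tree'.size t) F [t] := by
  induction h with
  | head ts =>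
    have h1 : EditSteps (Forest.size ts) ts [] := delete_all _ _ rfl
    have h2 := es_ctx [t] [] h1
    simp only [List.append_nil] at h2
    exact es_cast h2 (by rw [size_cons]; omega)
  | @inChildren cs a ts h ih =>
    -- delete ts, then delete the root a, then reduce cs to [t]
    have h1 : EditSteps (Forest.size ts) (Tree'.node a cs :: ts) [Tree'.node a cs] := by
      have := es_ctx [Tree'.node a cs] [] (delete_all (Forest.size ts) ts rfl)
      simpa using this
    have h2 : EditStep [Tree'.node a cs] cs := by
      simpa using EditStep.delete [] a cs []
    have h3 := es_trans h1 (es_cons h2 ih)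
    have hts := sub_size h
    exact es_cast h3 (by rw [size_cons, size_tree]; omega)
  | @tail ts t0 h ih =>
    have h1 : EditSteps (Tree'.size t0) (t0 :: ts) ts := by
      have := es_ctx [] ts (delete_all (Tree'.size t0) [t0] (by simp [size_cons, Forest.size]))
      simpa using this
    have h3 := es_trans h1 ih
    have hts := sub_size h
    have h0 := size_tree_pos (α := α) t0
    exact es_cast h3 (by rw [size_cons]; omega)

theorem ed_le {F1 F2 G : Forest α} {k1 k2 : ℕ} (h1 : EditSteps k1 F1 G)
    (h2 : EditSteps k2 F2 G) : ed F1 F2 ≤ k1 + k2 :=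
  Nat.sInf_le ⟨k1, k2, G, rfl, h1, h2⟩

theorem ed_spec (F1 F2 : Forest α) :
    ∃ (k1 k2 : ℕ) (G : Forest α), ed F1 F2 = k1 + k2 ∧ EditSteps k1 F1 G ∧ EditSteps k2 F2 G := by
  have hne : {k | ∃ (k1 k2 : ℕ) (G : Forest α),
      k = k1 + k2 ∧ EditSteps k1 F1 G ∧ EditSteps k2 F2 G}.Nonempty :=
    ⟨Forest.size F1 + Forest.size F2, Forest.size F1, Forest.size F2, [], rfl,
      delete_all _ _ rfl, delete_all _ _ rfl⟩
  exact Nat.sInf_mem hne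

end Aux2

/-- The children forest of a tree. -/
def childrenF {α : Type} : Tree' α → Forest α
  | .node _ cs => cs

section Aux3
variable {α : Type}

theorem occ_bounds {F : Forest α} {base p : ℕ} {t : Tree' α} (h : OccF F base p t) :
    base ≤ p ∧ p + 2 * Tree'.size t ≤ base + 2 * Forest.size F := by
  induction h with
  | head a cs ts base => rw [size_cons]; omega
  | inChildren a ts base h ih => rw [size_cons, size_tree]; omega
  | inRest t0 base h ih => rw [size_cons]; omega

theorem occ_sub {F : Forest α} {base p : ℕ} {t : Tree' α} (h : OccF F base p t) :
    SubT t F := by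
  induction h with
  | head a cs ts base => exact SubT.head _ _
  | inChildren a ts base h ih => exact SubT.inChildren a _ ih
  | inRest t0 base h ih => exact SubT.tail t0 ih

theorem occ_append {F : Forest α} (G : Forest α) {base p : ℕ} {t : Tree' α}
    (h : OccF F base p t) : OccF (F ++ G) base p t := by
  induction h with
  | head a cs ts base => exact OccF.head a cs _ base
  | inChildren a ts base h ih => exact OccF.inChildren a _ base h
  | inRest t0 base h ih => exact OccF.inRest t0 base ih

theorem sub_occ {t : Tree' α} {F : Forest α} (h : SubT t F) (base : ℕ) :
    ∃ p, OccF F base p t ∧ base ≤ p ∧ p + 2 * Tree'.size t ≤ base + 2 * Forest.size F := by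
  induction h generalizing base with
  | head ts =>
    cases t with
    | node a cs =>
      exact ⟨base, OccF.head a cs ts base, le_refl _, by rw [size_cons]; omega⟩
  | @inChildren cs a ts h ih =>
    obtain ⟨p, hp, h1, h2⟩ := ih (base + 1)
    exact ⟨p, OccF.inChildren a ts base hp, by omega, by rw [size_cons, size_tree]; omega⟩
  | @tail ts t0 h ih =>
    obtain ⟨p, hp, h1, h2⟩ := ih (base + 2 * Tree'.size t0)
    exact ⟨p, OccF.inRest t0 base hp, by omega, by rw [size_cons]; omega⟩

theorem cutF_nil_right : ∀ (n : ℕ) (F : Forest α), Forest.size F = n →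
    ∀ l r p, r ≤ p → cutF l r p F = [] := by
  intro n
  induction n using Nat.strong_induction_on with
  | _ n ih =>
    intro F hF l r p hrp
    match F with
    | [] => rfl
    | Tree'.node a cs :: ts =>
      rw [size_cons, size_tree] at hF
      rw [cutF, cutT]
      rw [if_neg (by rw [size_tree]; omega)]
      rw [ih (Forest.size cs) (by omega) cs rfl l r (p+1) (by omega),
          ih (Forest.size ts) (by omega) ts rfl l r _ (by simp only [size_tree]; omega)]
      rfl

theorem cutF_nil_left : ∀ (n : ℕ) (F : Forest α), Forest.size F = n →
    ∀ l r p, p + 2 * Forest.size F ≤ l → cutF l r p F = [] := by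
  intro n
  induction n using Nat.strong_induction_on with
  | _ n ih =>
    intro F hF l r p hl
    match F with
    | [] => rfl
    | Tree'.node a cs :: ts =>
      rw [size_cons, size_tree] at hF
      rw [size_cons, size_tree] at hl
      rw [cutF, cutT]
      rw [if_neg (by omega)]
      rw [ih (Forest.size cs) (by omega) cs rfl l r (p+1) (by omega),
          ih (Forest.size ts) (by omega) ts rfl l r _ (by simp only [size_tree]; omega)]
      rfl

theorem cutF_full : ∀ (n : ℕ) (F : Forest α), Forest.size F = n →
    ∀ l r p, l ≤ p → p + 2 * Forest.size F ≤ r → cutF l r p F = F := by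
  intro n
  induction n using Nat.strong_induction_on with
  | _ n ih =>
    intro F hF l r p hl hr
    match F with
    | [] => rfl
    | Tree'.node a cs :: ts =>
      rw [size_cons, size_tree] at hF
      rw [size_cons, size_tree] at hr
      rw [cutF, cutT]
      rw [if_pos (by rw [size_tree]; constructor <;> omega)]
      rw [ih (Forest.size ts) (by omega) ts rfl l r _ (by simp only [size_tree]; omega)
        (by simp only [size_tree]; omega)]
      rfl

theorem occ_keep {F : Forest α} {base p : ℕ} {t : Tree' α} (h : OccF F base p t) :
    ∀ l r : ℕ, l ≤ p → p + 2 * Tree'.size t ≤ r → SubT t (cutF l r base F) := by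
  induction h with
  | head a cs ts base =>
    intro l r hl hr
    rw [cutF, cutT, if_pos ⟨hl, hr⟩]
    exact SubT.head _ _
  | @inChildren cs p t a ts base h ih =>
    intro l r hl hr
    rw [cutF, cutT]
    by_cases hc : l ≤ base ∧ base + 2 * Tree'.size (Tree'.node a cs) ≤ r
    · rw [if_pos hc]
      exact sub_append_left _ (SubT.inChildren a [] (occ_sub h))
    · rw [if_neg hc]
      exact sub_append_left _ (ih l r hl hr)
  | inRest t0 base h ih =>
    intro l r hl hr
    rw [cutF]
    exact sub_append_right _ (ih l r hl hr)

theorem occ_interior {F : Forest α} {base p : ℕ} {t : Tree' α} (h : OccF F base p t) :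
    cutF (p + 1) (p + 2 * Tree'.size t - 1) base F = childrenF t := by
  induction h with
  | head a cs ts base =>
    rw [cutF, cutT, if_neg (by omega)]
    rw [size_tree, childrenF]
    have e1 : base + 2 * (1 + Forest.size cs) - 1 = (base + 1) + 2 * Forest.size cs := by omega
    rw [e1, cutF_full (Forest.size cs) cs rfl _ _ _ (by omega) (by omega),
      cutF_nil_right (Forest.size ts) ts rfl _ _ _ (by omega)]
    simp
  | @inChildren cs p t a ts base h ih =>
    have hb := occ_bounds h
    have h1 := size_tree_pos t
    rw [cutF, cutT, if_neg (by omega)]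
    rw [ih, cutF_nil_right (Forest.size ts) ts rfl _ _ _ (by simp only [size_tree]; omega)]
    simp
  | @inRest ts p t t0 base h ih =>
    have hb := occ_bounds h
    have h1 := size_tree_pos t
    have h0 := size_tree_pos t0
    rw [cutF]
    rw [ih]
    cases t0 with
    | node a0 cs0 =>
      rw [cutT, if_neg (by rw [size_tree] at hb ⊢; omega)]
      rw [cutF_nil_left (Forest.size cs0) cs0 rfl _ _ _ (by rw [size_tree] at hb; omega)]
      simp

theorem cut_occF : ∀ (n : ℕ) (F : Forest α), Forest.size F = n →
    ∀ l r p0 t, SubT t (cutF l r p0 F) →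
    ∃ p, OccF F p0 p t ∧ l ≤ p ∧ p + 2 * Tree'.size t ≤ r := by
  intro n
  induction n using Nat.strong_induction_on with
  | _ n ih =>
    intro F hF l r p0 t hsub
    match F with
    | [] => rw [cutF] at hsub; cases hsub
    | Tree'.node a cs :: ts =>
      rw [size_cons, size_tree] at hF
      rw [cutF] at hsub
      rcases sub_append_elim hsub with hs | hs
      · rw [cutT] at hs
        by_cases hc : l ≤ p0 ∧ p0 + 2 * Tree'.size (Tree'.node a cs) ≤ r
        · rw [if_pos hc] at hs
          obtain ⟨p, hp, h1, h2⟩ := sub_occ hs p0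
          refine ⟨p, ?_, by omega, ?_⟩
          · have := occ_append ts hp
            simpa using this
          · have : Forest.size [Tree'.node a cs] = Tree'.size (Tree'.node a cs) := by
              simp only [size_cons, Forest.size]
              omega
            omega
        · rw [if_neg hc] at hs
          obtain ⟨p, hp, h1, h2⟩ := ih (Forest.size cs) (by omega) cs rfl l r (p0+1) t hs
          exact ⟨p, OccF.inChildren a ts p0 hp, h1, h2⟩
      · obtain ⟨p, hp, h1, h2⟩ := ih (Forest.size ts) (by omega) ts rfl l r _ t hs
        exact ⟨p, OccF.inRest _ p0 hp, h1, h2⟩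

end Aux3

section Aux4
set_option linter.unusedSectionVars false
variable {α : Type} [DecidableEq α]

theorem singleton_eq {pre post : Forest α} {x y : Tree' α} (h : pre ++ x :: post = [y]) :
    pre = [] ∧ x = y ∧ post = [] := by
  cases pre with
  | nil => simpa using h
  | cons p ps =>
    exfalso
    have : ps ++ x :: post = [] := by
      have := congrArg List.length h
      simp at this
    simp at this

theorem step_inv {F G : Forest α} (s : EditStep F G) :
    (∃ pre a cs post, F = pre ++ Tree'.node a cs :: post ∧ G = pre ++ cs ++ post) ∨
    (∃ pre a b cs post, F = pre ++ Tree'.node a cs :: post ∧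
      G = pre ++ Tree'.node b cs :: post) ∨
    (∃ pre a cs cs' post, F = pre ++ Tree'.node a cs :: post ∧
      G = pre ++ Tree'.node a cs' :: post ∧ EditStep cs cs') := by
  cases s with
  | delete pre a cs post => exact Or.inl ⟨pre, a, cs, post, rfl, rfl⟩
  | relabel pre a b cs post => exact Or.inr (Or.inl ⟨pre, a, b, cs, post, rfl, rfl⟩)
  | @inside pre a cs cs' post h => exact Or.inr (Or.inr ⟨pre, a, cs, cs', post, rfl, rfl, h⟩)

theorem keyA {n : ℕ} {a : α} {cs H : Forest α}
    (h : EditSteps n [Tree'.node a cs] H) :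
    (∃ n', n' + 1 ≤ n ∧ EditSteps n' cs H) ∨
    (∃ (a' : α) (cs' : Forest α) (n' : ℕ), H = [Tree'.node a' cs'] ∧ EditSteps n' cs cs' ∧
      n' + (if a = a' then 0 else 1) ≤ n) := by
  induction n generalizing a cs with
  | zero =>
    exact Or.inr ⟨a, cs, 0, (es_zero h).symm, EditSteps.refl _, by simp⟩
  | succ n ihn =>
    rcases es_headrec h with ⟨h0, _⟩ | ⟨m, S₂, heq, s, hs⟩
    · omega
    · rcases step_inv s with ⟨pre, a0, cs0, post, hF, hG⟩ |
          ⟨pre, a0, b0, cs0, post, hF, hG⟩ | ⟨pre, a0, cs0, cs0', post, hF, hG, hstep⟩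
      · obtain ⟨hpre, hx, hpost⟩ := singleton_eq hF.symm
        subst hpre; subst hpost
        injection hx with h1 h2
        subst h1; subst h2
        simp only [List.nil_append, List.append_nil] at hG
        subst hG
        exact Or.inl ⟨m, by omega, hs⟩
      · obtain ⟨hpre, hx, hpost⟩ := singleton_eq hF.symm
        subst hpre; subst hpost
        injection hx with h1 h2
        subst h1; subst h2
        simp only [List.nil_append] at hG
        subst hG
        have hm : m = n := by omega
        subst hm
        rcases ihn hs with ⟨n', hn', hsteps⟩ | ⟨a', cs', n', rfl, hsteps, hb⟩
        · exact Or.inl ⟨n', by omega, hsteps⟩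
        · refine Or.inr ⟨a', cs', n', rfl, hsteps, ?_⟩
          split_ifs at hb ⊢ <;> omega
      · obtain ⟨hpre, hx, hpost⟩ := singleton_eq hF.symm
        subst hpre; subst hpost
        injection hx with h1 h2
        subst h1; subst h2
        simp only [List.nil_append] at hG
        subst hG
        have hm : m = n := by omega
        subst hm
        rcases ihn hs with ⟨n', hn', hsteps⟩ | ⟨a', cs', n', rfl, hsteps, hb⟩
        · exact Or.inl ⟨n' + 1, by omega, es_cons hstep hsteps⟩
        · exact Or.inr ⟨a', cs', n' + 1, rfl, es_cons hstep hsteps, by split_ifs at hb ⊢ <;> omega⟩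

end Aux4

section Aux5
set_option linter.unusedSectionVars false
variable {α : Type} [DecidableEq α]

theorem stepT {S S₂ : Forest α} (h : EditStep S S₂) :
    ∀ (c : α) (csv : Forest α), SubT (Tree'.node c csv) S₂ →
      SubT (Tree'.node c csv) S ∨
      (∃ cs', SubT (Tree'.node c cs') S ∧ EditStep cs' csv ∧
        Forest.size S + Forest.size csv = Forest.size S₂ + Forest.size cs') ∨
      (∃ c', SubT (Tree'.node c' csv) S ∧ Forest.size S = Forest.size S₂) := by
  induction h with
  | delete pre a xs post =>
    intro c csv hsub
    rcases sub_append_elim hsub with hs | hs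
    · rcases sub_append_elim hs with hs' | hs'
      · exact Or.inl (sub_append_left _ hs')
      · exact Or.inl (sub_append_right pre (SubT.inChildren a post hs'))
    · exact Or.inl (sub_append_right pre (SubT.tail _ hs))
  | relabel pre a b xs post =>
    intro c csv hsub
    have hsz : Forest.size (pre ++ Tree'.node a xs :: post)
        = Forest.size (pre ++ Tree'.node b xs :: post) := by
      simp [size_append, size_cons, size_tree]
    rcases sub_append_elim hsub with hs | hs
    · exact Or.inl (sub_append_left _ hs)
    · cases hs with
      | head => exact Or.inr (Or.inr ⟨a, sub_append_right pre (SubT.head _ _), hsz⟩)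
      | inChildren a' ts hs' => exact Or.inl (sub_append_right pre (SubT.inChildren a post hs'))
      | tail t0 hs' => exact Or.inl (sub_append_right pre (SubT.tail _ hs'))
  | @inside pre a cs0 cs0' post hstep ih =>
    intro c csv hsub
    rcases sub_append_elim hsub with hs | hs
    · exact Or.inl (sub_append_left _ hs)
    · cases hs with
      | head =>
        refine Or.inr (Or.inl ⟨cs0, sub_append_right pre (SubT.head _ _), hstep, ?_⟩)
        simp [size_append, size_cons, size_tree]; omega
      | inChildren a' ts hs' =>
        rcases ih c csv hs' with h1 | ⟨cs', h1, hstep', hsz⟩ | ⟨c', h1, hsz⟩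
        · exact Or.inl (sub_append_right pre (SubT.inChildren a post h1))
        · refine Or.inr (Or.inl ⟨cs', sub_append_right pre (SubT.inChildren a post h1),
            hstep', ?_⟩)
          simp only [size_append, size_cons, size_tree] at *; omega
        · refine Or.inr (Or.inr ⟨c', sub_append_right pre (SubT.inChildren a post h1), ?_⟩)
          simp only [size_append, size_cons, size_tree] at *; omega
      | tail t0 hs' => exact Or.inl (sub_append_right pre (SubT.tail _ hs'))

theorem keyB : ∀ (m : ℕ) (S : Forest α) (b : α) (ds : Forest α),
    EditSteps m S [Tree'.node b ds] →
    ∃ (c : α) (csv : Forest α) (m' : ℕ), SubT (Tree'.node c csv) S ∧ EditSteps m' csv ds ∧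
      (m' : ℤ) + Forest.size S - (1 + Forest.size csv) + (if c = b then 0 else 1) ≤ m := by
  intro m
  induction m with
  | zero =>
    intro S b ds h
    have hS := es_zero h
    subst hS
    refine ⟨b, ds, 0, SubT.head _ _, EditSteps.refl _, ?_⟩
    simp [size_cons, size_tree, Forest.size]
  | succ m ihm =>
    intro S b ds h
    rcases es_headrec h with ⟨h0, _⟩ | ⟨m0, S₂, heq, s, hs⟩
    · omega
    · have hm : m0 = m := by omega
      subst hm
      obtain ⟨c, csv, m', hsub, hsteps, hbound⟩ := ihm S₂ b ds hs
      have hss := step_size s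
      have hss1 : (Forest.size S₂ : ℤ) ≤ Forest.size S := by exact_mod_cast hss.1
      have hss2 : (Forest.size S : ℤ) ≤ Forest.size S₂ + 1 := by exact_mod_cast hss.2
      rcases stepT s c csv hsub with h1 | ⟨cs', h1, hstep, hsz⟩ | ⟨c', h1, hsz⟩
      · refine ⟨c, csv, m', h1, hsteps, ?_⟩
        push_cast
        split_ifs at hbound ⊢ <;> push_cast at hbound ⊢ <;> linarith
      · refine ⟨c, cs', m' + 1, h1, es_cons hstep hsteps, ?_⟩
        have hsz' : (Forest.size S : ℤ) + Forest.size csv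
            = Forest.size S₂ + Forest.size cs' := by exact_mod_cast hsz
        push_cast
        split_ifs at hbound ⊢ <;> push_cast at hbound ⊢ <;> linarith
      · refine ⟨c', csv, m', h1, hsteps, ?_⟩
        have hsz' : (Forest.size S : ℤ) = Forest.size S₂ := by exact_mod_cast hsz
        have hd : (if c' = b then (0:ℤ) else 1) ≤ (if c = b then (0:ℤ) else 1) + 1 := by
          split_ifs <;> norm_num
        push_cast
        split_ifs at hbound hd ⊢ <;> push_cast at hbound ⊢ <;> linarith

end Aux5

/-- For a single tree `F` with root labeled `a` and children forest `cs`: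
`sim(F, T2[i,j))` is the maximum of `sim(F - u, T2[i,j))` and, over all nodes `v ∈ T2[i,j)`,
`sim(F - u, T2[l(v)+1, r(v)-1)) + η(u, v)` where `η(u,v) = 2 - δ(u,v)`. -/
theorem sim_root_recurrence {α : Type} [DecidableEq α] (T2 : Forest α) (a : α)
    (cs : Forest α) (i j : ℕ) (hi : 1 ≤ i) (hij : i ≤ j)
    (hj : j ≤ 2 * Forest.size T2 + 1) :
    IsGreatest {x : ℤ |
        x = sim cs (subforest T2 i j) ∨
        ∃ (p : ℕ) (v : Tree' α), OccF T2 1 p v ∧ i ≤ p ∧ p + 2 * Tree'.size v ≤ j ∧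
          x = sim cs (subforest T2 (p + 1) (p + 2 * Tree'.size v - 1)) +
              (if a = Tree'.label v then (2 : ℤ) else 1)}
      (sim [Tree'.node a cs] (subforest T2 i j)) := by
  have hub : ∀ x ∈ {x : ℤ |
        x = sim cs (subforest T2 i j) ∨
        ∃ (p : ℕ) (v : Tree' α), OccF T2 1 p v ∧ i ≤ p ∧ p + 2 * Tree'.size v ≤ j ∧
          x = sim cs (subforest T2 (p + 1) (p + 2 * Tree'.size v - 1)) +
              (if a = Tree'.label v then (2 : ℤ) else 1)},
      x ≤ sim [Tree'.node a cs] (subforest T2 i j) := by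
    rintro x (hx | ⟨p, v, hocc, hip, hpj, hx⟩)
    · -- delete-root bound
      obtain ⟨k1, k2, G, hed, h1, h2⟩ := ed_spec cs (subforest T2 i j)
      have hscript : EditSteps (k1 + 1) [Tree'.node a cs] G := by
        refine es_trans (es_inside a h1) (es_single ?_)
        simpa using EditStep.delete [] a G []
      have hle : ed [Tree'.node a cs] (subforest T2 i j) ≤ k1 + 1 + k2 :=
        ed_le hscript h2
      have hle' : (ed [Tree'.node a cs] (subforest T2 i j) : ℤ) ≤ (k1 : ℤ) + 1 + k2 := by
        exact_mod_cast hle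
      have hedz : (ed cs (subforest T2 i j) : ℤ) = (k1 : ℤ) + k2 := by exact_mod_cast hed
      subst hx
      simp only [sim, size_cons, size_tree, Forest.size]
      push_cast
      linarith
    · cases v with
      | node b csv =>
        have hint : subforest T2 (p + 1) (p + 2 * Tree'.size (Tree'.node b csv) - 1) = csv :=
          occ_interior hocc
        obtain ⟨k1, k2, G, hed, h1, h2⟩ := ed_spec cs csv
        have hsub : SubT (Tree'.node b csv) (subforest T2 i j) := occ_keep hocc i j hip hpj
        have hvS := sub_size hsub
        have hred := reduce_to_sub hsub
        have hright : EditSteps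
            ((Forest.size (subforest T2 i j) - Tree'.size (Tree'.node b csv)) + k2)
            (subforest T2 i j) [Tree'.node b G] := es_trans hred (es_inside b h2)
        have hedz : (ed cs csv : ℤ) = (k1 : ℤ) + k2 := by exact_mod_cast hed
        have hvS' : (Tree'.size (Tree'.node b csv) : ℤ) ≤ Forest.size (subforest T2 i j) := by
          exact_mod_cast hvS
        subst hx
        rw [hint]
        by_cases hab : a = b
        · subst hab
          have hleft : EditSteps k1 [Tree'.node a cs] [Tree'.node a G] := es_inside a h1
          have hle := ed_le hleft hright
          have hle' : (ed [Tree'.node a cs] (subforest T2 i j) : ℤ)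
              ≤ (k1 : ℤ) + ((Forest.size (subforest T2 i j) : ℤ)
                - Tree'.size (Tree'.node a csv) + k2) := by
            have := hle
            zify [hvS] at this
            linarith
          simp only [sim, size_cons, size_tree, Forest.size, Tree'.label, if_pos rfl]
          simp only [size_tree] at hle' hvS'
          push_cast at hle' hvS' ⊢
          linarith
        · have hleft : EditSteps (k1 + 1) [Tree'.node a cs] [Tree'.node b G] := by
            refine es_trans (es_inside a h1) (es_single ?_)
            simpa using EditStep.relabel [] a b G []
          have hle := ed_le hleft hright
          have hle' : (ed [Tree'.node a cs] (subforest T2 i j) : ℤ)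
              ≤ (k1 : ℤ) + 1 + ((Forest.size (subforest T2 i j) : ℤ)
                - Tree'.size (Tree'.node b csv) + k2) := by
            have := hle
            zify [hvS] at this
            linarith
          have hlab : Tree'.label (Tree'.node b csv) = b := rfl
          rw [hlab, if_neg hab]
          simp only [sim, size_cons, size_tree, Forest.size]
          simp only [size_tree] at hle' hvS'
          push_cast at hle' hvS' ⊢
          linarith
  constructor
  · -- membership
    obtain ⟨k1, k2, G, hed, h1, h2⟩ := ed_spec [Tree'.node a cs] (subforest T2 i j)
    have hedz : (ed [Tree'.node a cs] (subforest T2 i j) : ℤ) = (k1 : ℤ) + k2 := by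
      exact_mod_cast hed
    rcases keyA h1 with ⟨n', hn', hsteps⟩ | ⟨a', cs', n1, rfl, hcs, hb1⟩
    · -- root is deleted in an optimal script
      have hle : ed cs (subforest T2 i j) ≤ n' + k2 := ed_le hsteps h2
      have hle' : (ed cs (subforest T2 i j) : ℤ) ≤ (n' : ℤ) + k2 := by exact_mod_cast hle
      have h1le : sim [Tree'.node a cs] (subforest T2 i j) ≤ sim cs (subforest T2 i j) := by
        simp only [sim, size_cons, size_tree, Forest.size]
        have hn'' : (n' : ℤ) + 1 ≤ k1 := by exact_mod_cast hn'
        push_cast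
        linarith
      have h2le := hub (sim cs (subforest T2 i j)) (Or.inl rfl)
      exact Or.inl (le_antisymm h1le h2le)
    · -- root is (possibly) relabeled and matched to a node of the subforest
      obtain ⟨c, csv, m', hsub, hsteps, hb2⟩ := keyB k2 (subforest T2 i j) a' cs' h2
      obtain ⟨p, hocc, hip, hpj⟩ := cut_occF (Forest.size T2) T2 rfl i j 1
        (Tree'.node c csv) hsub
      have hint : subforest T2 (p + 1) (p + 2 * Tree'.size (Tree'.node c csv) - 1) = csv :=
        occ_interior hocc
      have hedcc : ed cs csv ≤ n1 + m' := ed_le hcs hsteps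
      have hedcc' : (ed cs csv : ℤ) ≤ (n1 : ℤ) + m' := by exact_mod_cast hedcc
      have hb1' : (n1 : ℤ) + (if a = a' then 0 else 1) ≤ k1 := by
        split_ifs at hb1 ⊢ <;> exact_mod_cast hb1
      have tri : (if a = c then (0:ℤ) else 1)
          ≤ (if a = a' then (0:ℤ) else 1) + (if c = a' then (0:ℤ) else 1) := by
        by_cases e3 : a = c
        · rw [if_pos e3]
          have t1 : (0:ℤ) ≤ if a = a' then (0:ℤ) else 1 := by split_ifs <;> norm_num
          have t2 : (0:ℤ) ≤ if c = a' then (0:ℤ) else 1 := by split_ifs <;> norm_num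
          linarith
        · rw [if_neg e3]
          by_cases e1 : a = a'
          · have e2 : ¬ c = a' := fun h => e3 (e1.trans h.symm)
            rw [if_pos e1, if_neg e2]; norm_num
          · have t2 : (0:ℤ) ≤ if c = a' then (0:ℤ) else 1 := by split_ifs <;> norm_num
            rw [if_neg e1]; linarith
      have hx0 : sim cs csv + (if a = c then (2:ℤ) else 1)
          ≤ sim [Tree'.node a cs] (subforest T2 i j) := by
        refine hub _ (Or.inr ⟨p, Tree'.node c csv, hocc, hip, hpj, ?_⟩)
        rw [hint]
        rfl
      have hxle : sim [Tree'.node a cs] (subforest T2 i j)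
          ≤ sim cs csv + (if a = c then (2:ℤ) else 1) := by
        have h2' : (2:ℤ) - (if a = c then (0:ℤ) else 1) = (if a = c then (2:ℤ) else 1) := by
          split_ifs <;> norm_num
        simp only [sim, size_cons, size_tree, Forest.size]
        rw [← h2']
        push_cast
        linarith
      refine Or.inr ⟨p, Tree'.node c csv, hocc, hip, hpj, ?_⟩
      rw [hint]
      have : Tree'.label (Tree'.node c csv) = c := rfl
      rw [this]
      exact le_antisymm hxle hx0
  · exact hub
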